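/- arXiv:2510.18168 — 2 statements merged into one kernel-verified Lean document; each statement's English description precedes it below -/
import Mathlib

section
/- Let f : ℂ → ℂ be C¹ with f(0) = 0, satisfying Im(z̄ f(z)) = 0 for all z ∈ ℂ, and suppose there exists V ∈ C¹(ℂ, ℝ) with V(0) = 0 and f(z) = ∂V/∂z̄. Then V(z) depends only on |z|, i.e., V(e^{iθ}z) = V(z) for all z ∈ ℂ and θ ∈ ℝ. -/
open Complex

lemma key_zero (f : ℂ → ℂ) (V : ℂ → ℝ)
    (hA2 : ∀ z : ℂ, ((starRingEnd ℂ) z * f z).im = 0)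
    (hA3 : ∀ z : ℂ,
      f z = (1 / 2) * ((fderiv ℝ V z 1 : ℂ) + Complex.I * (fderiv ℝ V z Complex.I : ℂ)))
    (w : ℂ) : fderiv ℝ V w (Complex.I * w) = 0 := by
  set L := fderiv ℝ V w with hL
  set a := L 1 with ha
  set b := L Complex.I with hb
  have h2 := hA2 w
  rw [hA3 w] at h2
  have him : ((starRingEnd ℂ) w * ((1 / 2 : ℂ) * ((a : ℂ) + Complex.I * (b : ℂ)))).im
      = (w.re * b - w.im * a) / 2 := by
    simp [Complex.mul_im, Complex.mul_re, Complex.ofReal_re, Complex.ofReal_im]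
    ring
  rw [him] at h2
  have hab : w.re * b - w.im * a = 0 := by linarith
  have hdecomp : Complex.I * w = w.re • Complex.I + (-w.im) • (1 : ℂ) := by
    simp [Complex.ext_iff, Complex.smul_re, Complex.smul_im]
  rw [hdecomp, map_add, map_smul, map_smul]
  simp only [smul_eq_mul, ← ha, ← hb]
  linarith

/-- If `f : ℂ → ℂ` is C¹ with `f 0 = 0`, satisfies (A2)
`Im (conj z * f z) = 0`, and (A3) `f = ∂V/∂z̄` for a real-valued C¹ function `V`
with `V 0 = 0` (Wirtinger derivative, identifying ℂ with ℝ²), then `V` depends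
only on `|z|`: `V (exp (θ i) * z) = V z` for all `z`, `θ`. -/
theorem stmt0 (f : ℂ → ℂ) (V : ℂ → ℝ)
    (hf : ContDiff ℝ 1 f) (hf0 : f 0 = 0)
    (hA2 : ∀ z : ℂ, ((starRingEnd ℂ) z * f z).im = 0)
    (hV : ContDiff ℝ 1 V) (hV0 : V 0 = 0)
    (hA3 : ∀ z : ℂ,
      f z = (1 / 2) * ((fderiv ℝ V z 1 : ℂ) + Complex.I * (fderiv ℝ V z Complex.I : ℂ))) :
    ∀ (z : ℂ) (θ : ℝ), V (Complex.exp (θ * Complex.I) * z) = V z := by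
  intro z θ
  set g : ℝ → ℝ := fun t => V (Complex.exp (t * Complex.I) * z) with hg
  have hderiv : ∀ t : ℝ, HasDerivAt g 0 t := by
    intro t
    set w : ℂ := Complex.exp (t * Complex.I) * z with hw
    have h1 : HasDerivAt (fun s : ℝ => Complex.exp (s * Complex.I) * z)
        (Complex.I * w) t := by
      have h2 : HasDerivAt (fun s : ℝ => (s : ℂ) * Complex.I) Complex.I t := by
        simpa using (Complex.ofRealCLM.hasDerivAt (x := t)).mul_const Complex.I
      have h3 : HasDerivAt (fun s : ℝ => Complex.exp (s * Complex.I))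
          (Complex.exp (t * Complex.I) * Complex.I) t := by
        simpa using h2.cexp
      have := h3.mul_const z
      simpa [hw, mul_comm, mul_assoc, mul_left_comm] using this
    have hVd : HasFDerivAt V (fderiv ℝ V w) w :=
      (hV.differentiable one_ne_zero w).hasFDerivAt
    have := hVd.comp_hasDerivAt t h1
    simp only [key_zero f V hA2 hA3 w] at this
    exact this
  have hconst : ∀ x y : ℝ, g x = g y :=
    is_const_of_deriv_eq_zero (fun t => (hderiv t).differentiableAt)
      (fun t => (hderiv t).deriv)
  have := hconst θ 0
  simpa [hg] using this
end

section
/- Let f : ℂ → ℂ satisfy Im(z̄ f(z)) = 0 for all z ∈ ℂ and f(z) = ∂V/∂z̄ for some real-valued C¹ function V with V(0) = 0. Then f is gauge invariant: f(e^{iθ}z) = e^{iθ} f(z) for all z ∈ ℂ and θ ∈ ℝ. -/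
open Complex

private lemma hA2' (f : ℂ → ℂ) (V : ℂ → ℝ)
    (hA2 : ∀ z : ℂ, ((starRingEnd ℂ) z * f z).im = 0)
    (hA3 : ∀ z : ℂ,
      f z = (1 / 2) * ((fderiv ℝ V z 1 : ℂ) + Complex.I * (fderiv ℝ V z Complex.I : ℂ))) :
    ∀ w : ℂ, w.re * (fderiv ℝ V w Complex.I) - w.im * (fderiv ℝ V w 1) = 0 := by
  intro w
  have h := hA2 w
  rw [hA3 w] at h
  set a := fderiv ℝ V w 1
  set b := fderiv ℝ V w Complex.I
  simp [Complex.mul_im, Complex.mul_re] at h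
  linarith

private lemma lin_eval (w : ℂ) (D : ℂ →L[ℝ] ℝ) :
    D w = w.re * D 1 + w.im * D Complex.I := by
  have hw : w = (w.re : ℝ) • (1 : ℂ) + (w.im : ℝ) • Complex.I := by
    simp [Complex.ext_iff]
  calc D w = D ((w.re : ℝ) • (1 : ℂ) + (w.im : ℝ) • Complex.I) := by rw [← hw]
    _ = w.re * D 1 + w.im * D Complex.I := by
        rw [map_add, map_smul, map_smul]; simp [smul_eq_mul]

/-- If `f : ℂ → ℂ` satisfies (A2) `Im (conj z * f z) = 0` and
(A3) `f = ∂V/∂z̄` (Wirtinger derivative) for some real-valued C¹ function `V`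
with `V 0 = 0`, then `f` is gauge invariant: `f (exp (θ i) * z) = exp (θ i) * f z`. -/
theorem stmt1 (f : ℂ → ℂ) (V : ℂ → ℝ)
    (hA2 : ∀ z : ℂ, ((starRingEnd ℂ) z * f z).im = 0)
    (hV : ContDiff ℝ 1 V) (hV0 : V 0 = 0)
    (hA3 : ∀ z : ℂ,
      f z = (1 / 2) * ((fderiv ℝ V z 1 : ℂ) + Complex.I * (fderiv ℝ V z Complex.I : ℂ))) :
    ∀ (z : ℂ) (θ : ℝ),
      f (Complex.exp (θ * Complex.I) * z) = Complex.exp (θ * Complex.I) * f z := by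
  have hVd : Differentiable ℝ V := hV.differentiable one_ne_zero
  have key := hA2' f V hA2 hA3
  -- directional derivative of V along i*w vanishes
  have hdir : ∀ w : ℂ, fderiv ℝ V w (Complex.I * w) = 0 := by
    intro w
    rw [lin_eval (Complex.I * w)]
    have h1 : (Complex.I * w).re = -w.im := by simp
    have h2 : (Complex.I * w).im = w.re := by simp
    rw [h1, h2]
    have := key w
    linarith
  -- V is rotation invariant
  have hrot : ∀ (θ : ℝ) (z : ℂ), V (Complex.exp (θ * Complex.I) * z) = V z := by
    intro θ z
    set g : ℝ → ℝ := fun t => V (Complex.exp (t * Complex.I) * z) with hg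
    have hder : ∀ t : ℝ, HasDerivAt g 0 t := by
      intro t
      have h1 : HasDerivAt (fun t : ℝ => (t : ℂ) * Complex.I) Complex.I t := by
        simpa using (Complex.ofRealCLM.hasDerivAt (x := t)).mul_const Complex.I
      have h2 : HasDerivAt (fun t : ℝ => Complex.exp ((t : ℂ) * Complex.I))
          (Complex.exp ((t : ℂ) * Complex.I) * Complex.I) t := h1.cexp
      have h3 : HasDerivAt (fun t : ℝ => Complex.exp ((t : ℂ) * Complex.I) * z)
          (Complex.exp ((t : ℂ) * Complex.I) * Complex.I * z) t := h2.mul_const z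
      have h4 := (hVd (Complex.exp ((t : ℂ) * Complex.I) * z)).hasFDerivAt.comp_hasDerivAt t h3
      have heq : Complex.exp ((t : ℂ) * Complex.I) * Complex.I * z
          = Complex.I * (Complex.exp ((t : ℂ) * Complex.I) * z) := by ring
      rw [heq] at h4
      rw [hdir] at h4
      exact h4
    have hcon : ∀ t : ℝ, g t = g 0 := by
      intro t
      exact is_const_of_deriv_eq_zero (fun t => (hder t).differentiableAt)
        (fun t => (hder t).deriv) t 0
    have := hcon θ
    simpa [hg] using this
  -- differentiate rotation invariance
  intro z θ
  set c := Complex.exp (θ * Complex.I) with hc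
  have hcnorm : c.re ^ 2 + c.im ^ 2 = 1 := by
    have : ‖c‖ = 1 := by
      rw [hc]; exact Complex.norm_exp_ofReal_mul_I θ
    have h2 := Complex.sq_norm c
    rw [this] at h2
    simp [Complex.normSq_apply] at h2
    nlinarith
  -- chain rule relation
  have hchain : ∀ h : ℂ, fderiv ℝ V z h = fderiv ℝ V (c * z) (c * h) := by
    intro h
    have L : ℂ →L[ℝ] ℂ := (ContinuousLinearMap.mul ℝ ℂ) c
    have hL : HasFDerivAt (fun w : ℂ => c * w) ((ContinuousLinearMap.mul ℝ ℂ) c) z :=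
      ((ContinuousLinearMap.mul ℝ ℂ) c).hasFDerivAt
    have hcomp := (hVd (c * z)).hasFDerivAt.comp z hL
    have heq : (fun w : ℂ => V (c * w)) = V := by
      funext w
      exact hrot θ w
    rw [show (V ∘ fun w : ℂ => c * w) = V from heq] at hcomp
    have := hcomp.unique (hVd z).hasFDerivAt
    rw [← this]
    simp
  -- finish
  have h1 : fderiv ℝ V z 1 = fderiv ℝ V (c * z) c := by
    simpa using hchain 1
  have h2 : fderiv ℝ V z Complex.I = fderiv ℝ V (c * z) (c * Complex.I) := by
    simpa using hchain Complex.I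
  rw [hA3 (c * z), hA3 z, h1, h2]
  set D := fderiv ℝ V (c * z)
  set a := D 1 with ha
  set b := D Complex.I with hb
  have e1 : D c = c.re * a + c.im * b := lin_eval c D
  have e2 : D (c * Complex.I) = -c.im * a + c.re * b := by
    have := lin_eval (c * Complex.I) D
    simp only [Complex.mul_re, Complex.mul_im, Complex.I_re, Complex.I_im] at this
    rw [this, ha, hb]; ring
  rw [e1, e2]
  have hcc : (c.re : ℂ) ^ 2 + (c.im : ℂ) ^ 2 = 1 := by
    exact_mod_cast congrArg (fun x : ℝ => (x : ℂ)) hcnorm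
  have hcre : c = (c.re : ℂ) + (c.im : ℂ) * Complex.I := (Complex.re_add_im c).symm
  push_cast
  linear_combination
    (-(1/2) * (((c.re : ℂ) * (a : ℂ) + (c.im : ℂ) * (b : ℂ)) +
      Complex.I * ((c.re : ℂ) * (b : ℂ) - (c.im : ℂ) * (a : ℂ)))) * hcre +
    (-(1/2) * ((a : ℂ) + Complex.I * (b : ℂ))) * hcc +
    (-(1/2) * (c.im : ℂ) * ((c.re : ℂ) * (b : ℂ) - (c.im : ℂ) * (a : ℂ))) * Complex.I_sq
end
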